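/- Fix M ≥ 6. Given real parameters ρ > 0, θ > 0, u ∈ ℝ and f_3, ..., f_M ∈ ℝ (with the conventions f_1 = f_2 = 0), let A^{ML} be the (M+1)×(M+1) real matrix with rows and columns indexed 1,...,M+1 whose first four rows are (u, ρ, 0, ..., 0), (θ/ρ, u, 1, 0, ..., 0), (0, 2θ, u, 6/ρ, 0, ..., 0), (0, 4f_3, ρθ/2, u, 4, 0, ..., 0); whose row k for 5 ≤ k ≤ M has entries h_{k,1} = −θ f_{k−2}/ρ, h_{k,2} = k f_{k−1}, h_{k,3} = (θ/2) f_{k−4} + ((k−2)/2) f_{k−2}, h_{k,4} = −(3/ρ) f_{k−3} (this entry only for k ≥ 6), h_{k,k−1} = θ, h_{k,k} = u, h_{k,k+1} = k, and all other entries 0; and whose last row (row M+1) is (a_0, a_1, ..., a_M) for given reals a_0, ..., a_M. Then A^{ML} is an unreduced lower Hessenberg matrix (its superdiagonal entries ρ, 1, 6/ρ, 4, 5, ..., M are all nonzero), and its associated polynomial sequence satisfies, with z = (x − u)/√θ: q_0(x) = 1, q_1(x) = (θ^{1/2}/ρ)·He_1(z), q_2(x) = (θ/ρ)·He_2(z),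 q_3(x) = (θ^{3/2}/6)·He_3(z), and for every k with 4 ≤ k ≤ M, q_k(x) = (θ^{k/2}/k!)·He_k(z) − (θ f_{k−2}/(2ρ))·He_2(z) − (θ^{1/2} f_{k−1}/ρ)·He_1(z), for all x ∈ ℝ. -/

import Mathlib

/-- The superdiagonal entry `h_{i+1, i+2}` (1-based) of `H`, with the convention
`h_{n, n+1} = 1`.  Here `i` is 0-based. -/
def superEntry {n : ℕ} (H : Matrix (Fin n) (Fin n) ℝ) (i : ℕ) : ℝ :=
  if h : i + 1 < n then H ⟨i, by omega⟩ ⟨i + 1, h⟩ else 1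

/-- The entry `h_{i+1, j+1}` (1-based) of `H`, with `0` outside the matrix.
Here `i, j` are 0-based. -/
def lowEntry {n : ℕ} (H : Matrix (Fin n) (Fin n) ℝ) (i j : ℕ) : ℝ :=
  if h : i < n ∧ j < n then H ⟨i, h.1⟩ ⟨j, h.2⟩ else 0

/-- `H` is an unreduced lower Hessenberg matrix: `h_{ij} = 0` for `j > i + 1`
(1-based), and all superdiagonal entries `h_{i,i+1}` are nonzero. -/
def IsUnreducedLowerHessenberg {n : ℕ} (H : Matrix (Fin n) (Fin n) ℝ) : Prop :=
  (∀ i j : Fin n, (i : ℕ) + 1 < (j : ℕ) → H i j = 0) ∧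
  (∀ i : ℕ, ∀ h : i + 1 < n, H ⟨i, by omega⟩ ⟨i + 1, h⟩ ≠ 0)

/-- The associated polynomial sequence of a matrix `H` (intended: unreduced lower
Hessenberg): `q 0 = 1` and
`q (i+1) = (1 / h_{i+1,i+2}) * (X * q i − ∑_{j=0}^{i} h_{i+1,j+1} * q j)`
(1-based entries), with the convention `h_{n,n+1} = 1`. -/
noncomputable def assocPoly {n : ℕ} (H : Matrix (Fin n) (Fin n) ℝ) : ℕ → Polynomial ℝ
  | 0 => 1
  | i + 1 =>
      Polynomial.C (superEntry H i)⁻¹ *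
        (Polynomial.X * assocPoly H i -
          ∑ j : Fin (i + 1), Polynomial.C (lowEntry H i j) * assocPoly H j)

/-- The probabilists' Hermite polynomials, as real functions:
`He 0 x = 1`, `He 1 x = x`, `He (k+1) x = x * He k x − k * He (k−1) x`. -/
noncomputable def He : ℕ → ℝ → ℝ
  | 0, _ => 1
  | 1, x => x
  | n + 2, x => x * He (n + 1) x - ((n : ℝ) + 1) * He n x

/-- The coefficient matrix `A^{ML}` of the machine-learned moment closure system for the
BGK equation, of size `(M+1) × (M+1)`, built from the primitive variables
`ρ, u, θ`, the higher moments `f : ℕ → ℝ` (with the conventions `f 1 = f 2 = 0`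
imposed as hypotheses), and the last-row entries `a 0, …, a M`.  Rows and columns
are indexed `1, …, M+1` (internally `0`-based). -/
noncomputable def mlClosureMatrix (M : ℕ) (ρ u θ : ℝ) (f : ℕ → ℝ) (a : ℕ → ℝ) :
    Matrix (Fin (M + 1)) (Fin (M + 1)) ℝ :=
  Matrix.of fun i j =>
    let r : ℕ := (i : ℕ) + 1
    let c : ℕ := (j : ℕ) + 1
    if r = 1 then (if c = 1 then u else if c = 2 then ρ else 0)
    else if r = 2 then (if c = 1 then θ / ρ else if c = 2 then u else if c = 3 then 1 else 0)
    else if r = 3 then (if c = 2 then 2 * θ else if c = 3 then u else if c = 4 then 6 / ρ else 0)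
    else if r = 4 then
      (if c = 2 then 4 * f 3 else if c = 3 then ρ * θ / 2 else if c = 4 then u
       else if c = 5 then 4 else 0)
    else if r ≤ M then
      (if c = 1 then -(θ * f (r - 2)) / ρ
       else if c = 2 then (r : ℝ) * f (r - 1)
       else if c = 3 then θ / 2 * f (r - 4) + ((r : ℝ) - 2) / 2 * f (r - 2)
       else if c = 4 ∧ 6 ≤ r then -(3 / ρ) * f (r - 3)
       else if c = r - 1 then θ
       else if c = r then u
       else if c = r + 1 then (r : ℝ)
       else 0)
    else a (c - 1)

section Aux
variable {M : ℕ} {ρ u θ : ℝ} {f a : ℕ → ℝ}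

lemma evalRec (n : ℕ) (H : Matrix (Fin n) (Fin n) ℝ) (i : ℕ) (x : ℝ) :
    (assocPoly H (i+1)).eval x = (superEntry H i)⁻¹ *
      (x * (assocPoly H i).eval x -
        ∑ j ∈ Finset.range (i+1), lowEntry H i j * (assocPoly H j).eval x) := by
  simp only [assocPoly, Polynomial.eval_mul, Polynomial.eval_C, Polynomial.eval_sub,
    Polynomial.eval_X, Polynomial.eval_finset_sum]
  rw [Fin.sum_univ_eq_sum_range (fun j => lowEntry H i j * (assocPoly H j).eval x) (i+1)]

lemma entry_eq_low {n : ℕ} (H : Matrix (Fin n) (Fin n) ℝ) (i j : ℕ) (hi : i < n) (hj : j < n) :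
    H ⟨i, hi⟩ ⟨j, hj⟩ = lowEntry H i j := by
  rw [lowEntry, dif_pos ⟨hi, hj⟩]

lemma lowE (hM : 6 ≤ M) (k j : ℕ) (hk : k < M + 1) (hj : j < M + 1) :
    lowEntry (mlClosureMatrix M ρ u θ f a) k j =
    (if k + 1 = 1 then (if j + 1 = 1 then u else if j + 1 = 2 then ρ else 0)
    else if k + 1 = 2 then (if j + 1 = 1 then θ / ρ else if j + 1 = 2 then u else if j + 1 = 3 then 1 else 0)
    else if k + 1 = 3 then (if j + 1 = 2 then 2 * θ else if j + 1 = 3 then u else if j + 1 = 4 then 6 / ρ else 0)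
    else if k + 1 = 4 then
      (if j + 1 = 2 then 4 * f 3 else if j + 1 = 3 then ρ * θ / 2 else if j + 1 = 4 then u
       else if j + 1 = 5 then 4 else 0)
    else if k + 1 ≤ M then
      (if j + 1 = 1 then -(θ * f (k + 1 - 2)) / ρ
       else if j + 1 = 2 then ((k + 1 : ℕ) : ℝ) * f (k + 1 - 1)
       else if j + 1 = 3 then θ / 2 * f (k + 1 - 4) + (((k + 1 : ℕ) : ℝ) - 2) / 2 * f (k + 1 - 2)
       else if j + 1 = 4 ∧ 6 ≤ k + 1 then -(3 / ρ) * f (k + 1 - 3)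
       else if j + 1 = k + 1 - 1 then θ
       else if j + 1 = k + 1 then u
       else if j + 1 = k + 1 + 1 then ((k + 1 : ℕ) : ℝ)
       else 0)
    else a (j + 1 - 1)) := by
  rw [lowEntry, dif_pos ⟨hk, hj⟩]
  rfl

lemma L0 (hM : 6 ≤ M) (j : ℕ) (hj : j < M + 1) :
    lowEntry (mlClosureMatrix M ρ u θ f a) 0 j =
      if j = 0 then u else if j = 1 then ρ else 0 := by
  rw [lowE hM 0 j (by omega) hj]
  rcases j with _|_|j <;> rfl

lemma L1 (hM : 6 ≤ M) (j : ℕ) (hj : j < M + 1) :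
    lowEntry (mlClosureMatrix M ρ u θ f a) 1 j =
      if j = 0 then θ / ρ else if j = 1 then u else if j = 2 then 1 else 0 := by
  rw [lowE hM 1 j (by omega) hj]
  rcases j with _|_|_|j <;> rfl

lemma L2 (hM : 6 ≤ M) (j : ℕ) (hj : j < M + 1) :
    lowEntry (mlClosureMatrix M ρ u θ f a) 2 j =
      if j = 1 then 2 * θ else if j = 2 then u else if j = 3 then 6 / ρ else 0 := by
  rw [lowE hM 2 j (by omega) hj]
  rcases j with _|_|_|_|j <;> rfl

lemma L3 (hM : 6 ≤ M) (j : ℕ) (hj : j < M + 1) :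
    lowEntry (mlClosureMatrix M ρ u θ f a) 3 j =
      if j = 1 then 4 * f 3 else if j = 2 then ρ * θ / 2 else if j = 3 then u
      else if j = 4 then 4 else 0 := by
  rw [lowE hM 3 j (by omega) hj]
  rcases j with _|_|_|_|_|j <;> rfl

lemma Lgen (hM : 6 ≤ M) (k j : ℕ) (hk4 : 4 ≤ k) (hkM : k < M) (hj : j < M + 1) :
    lowEntry (mlClosureMatrix M ρ u θ f a) k j =
      if j = 0 then -(θ * f (k - 1)) / ρ
      else if j = 1 then ((k + 1 : ℕ) : ℝ) * f k
      else if j = 2 then θ / 2 * f (k - 3) + (((k + 1 : ℕ) : ℝ) - 2) / 2 * f (k - 1)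
      else if j = 3 ∧ 5 ≤ k then -(3 / ρ) * f (k - 2)
      else if j = k - 1 then θ
      else if j = k then u
      else if j = k + 1 then ((k + 1 : ℕ) : ℝ)
      else 0 := by
  obtain ⟨k', rfl⟩ : ∃ k', k = k' + 4 := ⟨k - 4, by omega⟩
  rw [lowE hM _ j (by omega) hj]
  rw [if_neg (show ¬(k' + 4 + 1 = 1) by omega), if_neg (show ¬(k' + 4 + 1 = 2) by omega),
      if_neg (show ¬(k' + 4 + 1 = 3) by omega), if_neg (show ¬(k' + 4 + 1 = 4) by omega),
      if_pos (show k' + 4 + 1 ≤ M by omega)]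
  rcases j with _|_|_|_|j
  · rfl
  · rfl
  · rfl
  · -- j = 3
    rcases Nat.eq_zero_or_pos k' with hk' | hk'
    · subst hk'; rfl
    · rw [if_neg (by omega), if_neg (by omega), if_neg (by omega), if_pos (by omega),
          if_neg (by omega), if_neg (by omega), if_neg (by omega), if_pos (by omega)]
      rw [show k' + 4 + 1 - 3 = k' + 4 - 2 from by omega]
  · -- j = j' + 4
    rw [if_neg (show ¬(j + 4 + 1 = 1) by omega), if_neg (show ¬(j + 4 + 1 = 2) by omega),
        if_neg (show ¬(j + 4 + 1 = 3) by omega),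
        if_neg (show ¬(j + 4 + 1 = 4 ∧ 6 ≤ k' + 4 + 1) by omega),
        if_neg (show ¬(j + 4 = 0) by omega), if_neg (show ¬(j + 4 = 1) by omega),
        if_neg (show ¬(j + 4 = 2) by omega),
        if_neg (show ¬(j + 4 = 3 ∧ 5 ≤ k' + 4) by omega)]
    by_cases h1 : j + 4 + 1 = k' + 4 + 1 - 1
    · rw [if_pos h1, if_pos (show j + 4 = k' + 4 - 1 by omega)]
    · rw [if_neg h1, if_neg (show ¬(j + 4 = k' + 4 - 1) by omega)]
      by_cases h2 : j = k'
      · rw [if_pos (show j + 4 + 1 = k' + 4 + 1 by omega), if_pos (show j + 4 = k' + 4 by omega)]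
      · rw [if_neg (show ¬(j + 4 + 1 = k' + 4 + 1) by omega),
            if_neg (show ¬(j + 4 = k' + 4) by omega)]
        by_cases h3 : j = k' + 1
        · rw [if_pos (show j + 4 + 1 = k' + 4 + 1 + 1 by omega),
              if_pos (show j + 4 = k' + 4 + 1 by omega)]
        · rw [if_neg (show ¬(j + 4 + 1 = k' + 4 + 1 + 1) by omega),
              if_neg (show ¬(j + 4 = k' + 4 + 1) by omega)]

lemma sup0 (hM : 6 ≤ M) : superEntry (mlClosureMatrix M ρ u θ f a) 0 = ρ := by
  rw [superEntry, dif_pos (show 0 + 1 < M + 1 by omega),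
    entry_eq_low (mlClosureMatrix M ρ u θ f a) 0 1 (by omega) (by omega), L0 hM 1 (by omega)]
  rfl

lemma sup1 (hM : 6 ≤ M) : superEntry (mlClosureMatrix M ρ u θ f a) 1 = 1 := by
  rw [superEntry, dif_pos (show 1 + 1 < M + 1 by omega),
    entry_eq_low (mlClosureMatrix M ρ u θ f a) 1 2 (by omega) (by omega), L1 hM 2 (by omega)]
  rfl

lemma sup2 (hM : 6 ≤ M) : superEntry (mlClosureMatrix M ρ u θ f a) 2 = 6 / ρ := by
  rw [superEntry, dif_pos (show 2 + 1 < M + 1 by omega),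
    entry_eq_low (mlClosureMatrix M ρ u θ f a) 2 3 (by omega) (by omega), L2 hM 3 (by omega)]
  rfl

lemma sup3 (hM : 6 ≤ M) : superEntry (mlClosureMatrix M ρ u θ f a) 3 = 4 := by
  rw [superEntry, dif_pos (show 3 + 1 < M + 1 by omega),
    entry_eq_low (mlClosureMatrix M ρ u θ f a) 3 4 (by omega) (by omega), L3 hM 4 (by omega)]
  rfl

lemma supGen (hM : 6 ≤ M) (i : ℕ) (hi4 : 4 ≤ i) (hiM : i < M) :
    superEntry (mlClosureMatrix M ρ u θ f a) i = ((i + 1 : ℕ) : ℝ) := by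
  rw [superEntry, dif_pos (show i + 1 < M + 1 by omega),
    entry_eq_low (mlClosureMatrix M ρ u θ f a) i (i + 1) (by omega) (by omega),
    Lgen hM i (i + 1) hi4 hiM (by omega)]
  rw [if_neg (show ¬(i + 1 = 0) by omega), if_neg (show ¬(i + 1 = 1) by omega),
      if_neg (show ¬(i + 1 = 2) by omega), if_neg (show ¬(i + 1 = 3 ∧ 5 ≤ i) by omega),
      if_neg (show ¬(i + 1 = i - 1) by omega), if_neg (show ¬(i + 1 = i) by omega),
      if_pos (show i + 1 = i + 1 from rfl)]

lemma hess (hM : 6 ≤ M) (hρ : 0 < ρ) :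
    IsUnreducedLowerHessenberg (mlClosureMatrix M ρ u θ f a) := by
  constructor
  · rintro ⟨i, hi⟩ ⟨j, hj⟩ hij
    replace hij : i + 1 < j := hij
    rw [entry_eq_low (mlClosureMatrix M ρ u θ f a) i j hi hj]
    rcases i with _|_|_|_|i
    · rw [L0 hM j hj, if_neg (by omega), if_neg (by omega)]
    · rw [L1 hM j hj, if_neg (by omega), if_neg (by omega), if_neg (by omega)]
    · rw [L2 hM j hj, if_neg (by omega), if_neg (by omega), if_neg (by omega)]
    · rw [L3 hM j hj, if_neg (by omega), if_neg (by omega), if_neg (by omega),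
        if_neg (by omega)]
    · by_cases hiM : i + 4 < M
      · rw [Lgen hM (i + 4) j (by omega) hiM hj, if_neg (by omega), if_neg (by omega),
          if_neg (by omega), if_neg (show ¬(j = 3 ∧ 5 ≤ i + 4) by omega),
          if_neg (by omega), if_neg (by omega), if_neg (by omega)]
      · exfalso; omega
  · intro i h
    rw [entry_eq_low (mlClosureMatrix M ρ u θ f a) i (i + 1) (by omega) h]
    rcases i with _|_|_|_|i
    · rw [L0 hM 1 (by omega)]; exact hρ.ne'
    · rw [L1 hM 2 (by omega)]; norm_num
    · rw [L2 hM 3 (by omega)]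
      exact div_ne_zero (by norm_num) hρ.ne'
    · rw [L3 hM 4 (by omega)]; norm_num
    · rw [Lgen hM _ _ (by omega) (by omega) (by omega), if_neg (by omega),
        if_neg (by omega), if_neg (by omega), if_neg (show ¬(_ ∧ _) by omega),
        if_neg (by omega), if_neg (by omega), if_pos (by omega)]
      exact Nat.cast_ne_zero.mpr (by omega)
lemma sumRow (hM : 6 ≤ M) (m : ℕ) (hm : 4 ≤ m) (hmM : m + 2 ≤ M) (g : ℕ → ℝ) :
    ∑ j ∈ Finset.range (m + 2), lowEntry (mlClosureMatrix M ρ u θ f a) (m + 1) j * g j =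
      -(θ * f m) / ρ * g 0 + ((m + 2 : ℕ) : ℝ) * f (m + 1) * g 1 +
      (θ / 2 * f (m - 2) + (((m + 2 : ℕ) : ℝ) - 2) / 2 * f m) * g 2 +
      -(3 / ρ) * f (m - 1) * g 3 + θ * g m + u * g (m + 1) := by
  rw [← Finset.sum_subset (show ({0, 1, 2, 3, m, m + 1} : Finset ℕ) ⊆ Finset.range (m + 2) by
      intro x hx
      simp only [Finset.mem_insert, Finset.mem_singleton] at hx
      simp only [Finset.mem_range]
      omega)
    (by
      intro x hx hxS
      simp only [Finset.mem_range] at hx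
      simp only [Finset.mem_insert, Finset.mem_singleton] at hxS
      push_neg at hxS
      rw [Lgen hM (m + 1) x (by omega) (by omega) (by omega), if_neg (by omega),
        if_neg (by omega), if_neg (by omega), if_neg (show ¬(x = 3 ∧ 5 ≤ m + 1) by omega),
        if_neg (by omega), if_neg (by omega), if_neg (by omega)]
      exact zero_mul _)]
  rw [Finset.sum_insert (by simp only [Finset.mem_insert, Finset.mem_singleton]; omega),
    Finset.sum_insert (by simp only [Finset.mem_insert, Finset.mem_singleton]; omega),
    Finset.sum_insert (by simp only [Finset.mem_insert, Finset.mem_singleton]; omega),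
    Finset.sum_insert (by simp only [Finset.mem_insert, Finset.mem_singleton]; omega),
    Finset.sum_insert (by simp only [Finset.mem_singleton]; omega),
    Finset.sum_singleton]
  rw [Lgen hM (m + 1) 0 (by omega) (by omega) (by omega),
    Lgen hM (m + 1) 1 (by omega) (by omega) (by omega),
    Lgen hM (m + 1) 2 (by omega) (by omega) (by omega),
    Lgen hM (m + 1) 3 (by omega) (by omega) (by omega),
    Lgen hM (m + 1) m (by omega) (by omega) (by omega),
    Lgen hM (m + 1) (m + 1) (by omega) (by omega) (by omega)]
  rw [if_pos (show (0 : ℕ) = 0 by omega),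
    if_neg (show ¬((1 : ℕ) = 0) by omega), if_pos (show (1 : ℕ) = 1 by omega),
    if_neg (show ¬((2 : ℕ) = 0) by omega), if_neg (show ¬((2 : ℕ) = 1) by omega),
    if_pos (show (2 : ℕ) = 2 by omega),
    if_neg (show ¬((3 : ℕ) = 0) by omega), if_neg (show ¬((3 : ℕ) = 1) by omega),
    if_neg (show ¬((3 : ℕ) = 2) by omega), if_pos (show (3 : ℕ) = 3 ∧ 5 ≤ m + 1 by omega),
    if_neg (show ¬(m = 0) by omega), if_neg (show ¬(m = 1) by omega),
    if_neg (show ¬(m = 2) by omega), if_neg (show ¬(m = 3 ∧ 5 ≤ m + 1) by omega),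
    if_pos (show m = m + 1 - 1 by omega),
    if_neg (show ¬(m + 1 = 0) by omega), if_neg (show ¬(m + 1 = 1) by omega),
    if_neg (show ¬(m + 1 = 2) by omega), if_neg (show ¬(m + 1 = 3 ∧ 5 ≤ m + 1) by omega),
    if_neg (show ¬(m + 1 = m + 1 - 1) by omega), if_pos (show m + 1 = m + 1 by omega)]
  rw [show m + 1 - 1 = m from by omega, show m + 1 - 3 = m - 2 from by omega,
    show m + 1 - 2 = m - 1 from by omega, show m + 1 + 1 = m + 2 from by omega]
  ring

end Aux

section Bases
variable {M : ℕ} {ρ u θ : ℝ} {f a : ℕ → ℝ}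

lemma Q0eq (x : ℝ) : (assocPoly (mlClosureMatrix M ρ u θ f a) 0).eval x = 1 := by
  simp [assocPoly]

lemma Q1eq (hM : 6 ≤ M) (hρ : ρ ≠ 0) (x : ℝ) :
    (assocPoly (mlClosureMatrix M ρ u θ f a) 1).eval x = (x - u) / ρ := by
  rw [show assocPoly (mlClosureMatrix M ρ u θ f a) 1 = assocPoly (mlClosureMatrix M ρ u θ f a) (0+1) from rfl,
    evalRec, sup0 hM, Finset.sum_range_one, L0 hM 0 (by omega), Q0eq]
  norm_num
  field_simp

lemma Q2eq (hM : 6 ≤ M) (hρ : ρ ≠ 0) (x : ℝ) :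
    (assocPoly (mlClosureMatrix M ρ u θ f a) 2).eval x = ((x - u)^2 - θ) / ρ := by
  rw [show assocPoly (mlClosureMatrix M ρ u θ f a) 2 = assocPoly (mlClosureMatrix M ρ u θ f a) (1+1) from rfl,
    evalRec, sup1 hM, Finset.sum_range_succ, Finset.sum_range_one,
    L1 hM 0 (by omega), L1 hM 1 (by omega), Q0eq, Q1eq hM hρ]
  norm_num
  field_simp
  ring

lemma Q3eq (hM : 6 ≤ M) (hρ : ρ ≠ 0) (x : ℝ) :
    (assocPoly (mlClosureMatrix M ρ u θ f a) 3).eval x = ((x - u)^3 - 3*θ*(x - u)) / 6 := by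
  rw [show assocPoly (mlClosureMatrix M ρ u θ f a) 3 = assocPoly (mlClosureMatrix M ρ u θ f a) (2+1) from rfl,
    evalRec, sup2 hM, Finset.sum_range_succ, Finset.sum_range_succ, Finset.sum_range_one,
    L2 hM 0 (by omega), L2 hM 1 (by omega), L2 hM 2 (by omega),
    Q0eq, Q1eq hM hρ, Q2eq hM hρ]
  norm_num
  field_simp
  ring

lemma Q4eq (hM : 6 ≤ M) (hρ : ρ ≠ 0) (x : ℝ) :
    (assocPoly (mlClosureMatrix M ρ u θ f a) 4).eval x =
      ((x - u)^4 - 6*θ*(x - u)^2 + 3*θ^2) / 24 - f 3 * (x - u) / ρ := by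
  rw [show assocPoly (mlClosureMatrix M ρ u θ f a) 4 = assocPoly (mlClosureMatrix M ρ u θ f a) (3+1) from rfl,
    evalRec, sup3 hM, Finset.sum_range_succ, Finset.sum_range_succ, Finset.sum_range_succ,
    Finset.sum_range_one,
    L3 hM 0 (by omega), L3 hM 1 (by omega), L3 hM 2 (by omega), L3 hM 3 (by omega),
    Q0eq, Q1eq hM hρ, Q2eq hM hρ, Q3eq hM hρ]
  norm_num
  field_simp
  ring

lemma Q5eq (hM : 6 ≤ M) (hρ : ρ ≠ 0) (hf1 : f 1 = 0) (x : ℝ) :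
    (assocPoly (mlClosureMatrix M ρ u θ f a) 5).eval x =
      ((x - u)^5 - 10*θ*(x - u)^3 + 15*θ^2*(x - u)) / 120
        - f 3 * ((x - u)^2 - θ) / (2*ρ) - f 4 * (x - u) / ρ := by
  rw [show assocPoly (mlClosureMatrix M ρ u θ f a) 5 = assocPoly (mlClosureMatrix M ρ u θ f a) (4+1) from rfl,
    evalRec, supGen hM 4 (by omega) (by omega), Finset.sum_range_succ, Finset.sum_range_succ,
    Finset.sum_range_succ, Finset.sum_range_succ, Finset.sum_range_one,
    Lgen hM 4 0 (by omega) (by omega) (by omega), Lgen hM 4 1 (by omega) (by omega) (by omega),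
    Lgen hM 4 2 (by omega) (by omega) (by omega), Lgen hM 4 3 (by omega) (by omega) (by omega),
    Lgen hM 4 4 (by omega) (by omega) (by omega),
    Q0eq, Q1eq hM hρ, Q2eq hM hρ, Q3eq hM hρ, Q4eq hM hρ]
  norm_num [hf1]
  field_simp
  ring

end Bases

section Main
variable {M : ℕ} {ρ u θ : ℝ} {f a : ℕ → ℝ}

lemma He_rec (n : ℕ) (z : ℝ) : He (n+2) z = z * He (n+1) z - ((n:ℝ)+1) * He n z := rfl

lemma He1e (z : ℝ) : He 1 z = z := rfl

lemma He0e (z : ℝ) : He 0 z = 1 := rfl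

lemma He2e (z : ℝ) : He 2 z = z^2 - 1 := by
  rw [show (2:ℕ) = 0+2 from rfl, He_rec, He1e, He0e]; push_cast; ring

lemma He3e (z : ℝ) : He 3 z = z^3 - 3*z := by
  rw [show (3:ℕ) = 1+2 from rfl, He_rec, He2e, He1e]; push_cast; ring

lemma He4e (z : ℝ) : He 4 z = z^4 - 6*z^2 + 3 := by
  show He (2+2) z = z^4 - 6*z^2 + 3
  rw [He_rec, He3e, He2e]; push_cast; ring

lemma He5e (z : ℝ) : He 5 z = z^5 - 10*z^3 + 15*z := by
  show He (3+2) z = z^5 - 10*z^3 + 15*z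
  rw [He_rec, He4e, He3e]; push_cast; ring

set_option maxHeartbeats 2000000 in
lemma QgenEq (hM : 6 ≤ M) (hρ : ρ ≠ 0) (hf1 : f 1 = 0) (hf2 : f 2 = 0)
    (s : ℝ) (hs0 : s ≠ 0) (hs2 : s^2 = θ) :
    ∀ k, 4 ≤ k → k ≤ M → ∀ x : ℝ,
      (assocPoly (mlClosureMatrix M ρ u θ f a) k).eval x =
        s^k / (Nat.factorial k : ℝ) * He k ((x - u)/s)
          - θ * f (k-2) / (2*ρ) * He 2 ((x - u)/s)
          - s * f (k-1) / ρ * He 1 ((x - u)/s) := by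
  intro k
  induction k using Nat.strong_induction_on with
  | _ k IH =>
    intro hk4 hkM x
    rcases Nat.lt_or_ge k 6 with hk6 | hk6
    · rcases (show k = 4 ∨ k = 5 by omega) with rfl | rfl
      · rw [Q4eq hM hρ, show (4:ℕ)-2 = 2 from rfl, show (4:ℕ)-1 = 3 from rfl, hf2,
          He4e, He1e, show Nat.factorial 4 = 24 from rfl, ← hs2]
        clear IH
        push_cast
        field_simp
        ring
      · rw [Q5eq hM hρ hf1, show (5:ℕ)-2 = 3 from rfl, show (5:ℕ)-1 = 4 from rfl,
          He5e, He2e, He1e, show Nat.factorial 5 = 120 from rfl, ← hs2]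
        clear IH
        push_cast
        field_simp
    · obtain ⟨m, rfl⟩ : ∃ m, k = m + 2 := ⟨k - 2, by omega⟩
      have hm4 : 4 ≤ m := by omega
      rw [show assocPoly (mlClosureMatrix M ρ u θ f a) (m+2)
            = assocPoly (mlClosureMatrix M ρ u θ f a) ((m+1)+1) from rfl,
        evalRec, supGen hM (m+1) (by omega) (by omega),
        show m+1+1 = m+2 from rfl,
        sumRow hM m (by omega) (by omega) (fun j => (assocPoly (mlClosureMatrix M ρ u θ f a) j).eval x),
        Q0eq, Q1eq hM hρ, Q2eq hM hρ, Q3eq hM hρ,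
        IH m (by omega) (by omega) (by omega) x,
        IH (m+1) (by omega) (by omega) (by omega) x]
      rw [show m+2-2 = m from rfl, show m+2-1 = m+1 from rfl,
        show m+1-2 = m-1 from rfl, show m+1-1 = m from rfl,
        He_rec m ((x-u)/s), He2e, He1e,
        Nat.factorial_succ (m+1), Nat.factorial_succ m,
        pow_succ s (m+1), pow_succ s m, ← hs2]
      have hfac : ((Nat.factorial m : ℝ)) ≠ 0 := Nat.cast_ne_zero.mpr (Nat.factorial_ne_zero m)
      have hm1 : ((m:ℝ) + 1) ≠ 0 := by positivity
      have hm2 : ((m:ℝ) + 2) ≠ 0 := by positivity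
      clear IH
      push_cast
      field_simp
      ring

end Main
/-- **The associated polynomials of `A^{ML}` in the Hermite basis (orders `0, …, M`).**
The matrix `A^{ML}` is an unreduced lower Hessenberg matrix, and its associated
polynomial sequence satisfies, with `z = (x − u)/√θ`:
`q_0 = 1`, `q_1 = (√θ/ρ)·He₁(z)`, `q_2 = (θ/ρ)·He₂(z)`, `q_3 = (θ^{3/2}/6)·He₃(z)`,
and for `4 ≤ k ≤ M`,
`q_k = (θ^{k/2}/k!)·He_k(z) − (θ f_{k−2}/(2ρ))·He₂(z) − (√θ f_{k−1}/ρ)·He₁(z)`. -/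
theorem assocPoly_mlClosureMatrix_hermite (M : ℕ) (hM : 6 ≤ M)
    (ρ u θ : ℝ) (hρ : 0 < ρ) (hθ : 0 < θ)
    (f : ℕ → ℝ) (hf1 : f 1 = 0) (hf2 : f 2 = 0) (a : ℕ → ℝ) :
    IsUnreducedLowerHessenberg (mlClosureMatrix M ρ u θ f a) ∧
    (∀ x : ℝ, (assocPoly (mlClosureMatrix M ρ u θ f a) 0).eval x = 1) ∧
    (∀ x : ℝ, (assocPoly (mlClosureMatrix M ρ u θ f a) 1).eval x =
      Real.sqrt θ / ρ * He 1 ((x - u) / Real.sqrt θ)) ∧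
    (∀ x : ℝ, (assocPoly (mlClosureMatrix M ρ u θ f a) 2).eval x =
      θ / ρ * He 2 ((x - u) / Real.sqrt θ)) ∧
    (∀ x : ℝ, (assocPoly (mlClosureMatrix M ρ u θ f a) 3).eval x =
      Real.sqrt θ ^ 3 / 6 * He 3 ((x - u) / Real.sqrt θ)) ∧
    (∀ k : ℕ, 4 ≤ k → k ≤ M → ∀ x : ℝ,
      (assocPoly (mlClosureMatrix M ρ u θ f a) k).eval x =
        Real.sqrt θ ^ k / (Nat.factorial k : ℝ) * He k ((x - u) / Real.sqrt θ) -
          θ * f (k - 2) / (2 * ρ) * He 2 ((x - u) / Real.sqrt θ) -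
          Real.sqrt θ * f (k - 1) / ρ * He 1 ((x - u) / Real.sqrt θ)) := by
  have hρ' : ρ ≠ 0 := hρ.ne'
  have hs0 : Real.sqrt θ ≠ 0 := (Real.sqrt_pos.mpr hθ).ne'
  have hs2 : (Real.sqrt θ)^2 = θ := Real.sq_sqrt hθ.le
  refine ⟨hess hM hρ, fun x => Q0eq x, fun x => ?_, fun x => ?_, fun x => ?_,
    fun k hk4 hkM x => QgenEq hM hρ' hf1 hf2 _ hs0 hs2 k hk4 hkM x⟩
  · rw [Q1eq hM hρ', He1e]
    generalize hg : Real.sqrt θ = s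
    rw [hg] at hs2 hs0
    field_simp
  · rw [Q2eq hM hρ', He2e]
    generalize hg : Real.sqrt θ = s
    rw [hg] at hs2 hs0
    rw [← hs2]
    field_simp
  · rw [Q3eq hM hρ', He3e]
    generalize hg : Real.sqrt θ = s
    rw [hg] at hs2 hs0
    rw [← hs2]
    field_simp
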